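/- arXiv:1902.10738 — 5 statements merged into one kernel-verified Lean document; each statement's English description precedes it below -/
import Mathlib

section
/- (Theorem 2: coded communication load.) Let P ≥ 1, m_1,…,m_P ≥ 2 integers, r_1,…,r_P positive integers, r = Σ_p r_p with r ≥ 2, and let η1, η2, Y be positive integers with (m_p − 1) ∣ Y for all p. Set N = η1·∏_p m_p^{r_p}, X = ∏_p m_p^{r_p}, and Q = η2·Y·Σ_p r_p·m_p/(m_p − 1). The coded Shuffle phase consists of X multicast groups in each of which every one of the r member nodes transmits a coded message of η1·η2·Y/(r − 1) intermediate values; hence the coded communication load L_c = (1/(Q·N))·X·r·(η1·η2·Y/(r − 1)) satisfies L_c = (1/(r − 1))·r/(Σ_{p=1}^{P} r_p·m_p/(m_p − 1)), i.e., L_c = L_u/(r − 1) where L_u = r/(Σ_p r_p·m_p/(m_p − 1)). -/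
/-- **Theorem 2: coded communication load.** With `P ≥ 1` classes,
`m p ≥ 2`, `rp p ≥ 1`, `r = ∑ p, rp p ≥ 2`, positive `η1, η2, Y` with `(m p - 1) ∣ Y`,
`N = η1 * ∏ p, (m p)^(rp p)`, `X = ∏ p, (m p)^(rp p)` and
`Q = η2 * Y * ∑ p, rp p * m p / (m p - 1)`, the coded Shuffle phase consists of `X`
multicast groups in each of which every one of the `r` member nodes transmits a coded
message of `η1 * η2 * Y / (r - 1)` intermediate values; hence the coded communication
load `L_c = (1/(Q*N)) * X * r * (η1 * η2 * Y / (r - 1))` satisfies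
`L_c = (1/(r-1)) * r / (∑ p, rp p * m p / (m p - 1))`, i.e. `L_c = L_u / (r - 1)`. -/
theorem stmt_4 (P : ℕ) (hP : 1 ≤ P) (m rp : Fin P → ℕ)
    (hm : ∀ p, 2 ≤ m p) (hrp : ∀ p, 1 ≤ rp p)
    (r : ℕ) (hr : r = ∑ p, rp p) (hr2 : 2 ≤ r)
    (η1 η2 Y : ℕ) (hη1 : 0 < η1) (hη2 : 0 < η2) (hY : 0 < Y)
    (hdvd : ∀ p, (m p - 1) ∣ Y)
    (N X Q Lc Lu : ℝ)
    (hN : N = (η1 : ℝ) * ∏ p, (m p : ℝ) ^ (rp p))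
    (hX : X = ∏ p, (m p : ℝ) ^ (rp p))
    (hQ : Q = (η2 : ℝ) * Y * ∑ p, (rp p : ℝ) * (m p) / ((m p : ℝ) - 1))
    (hLc : Lc = (1 / (Q * N)) * X * r * ((η1 : ℝ) * η2 * Y / ((r : ℝ) - 1)))
    (hLu : Lu = (r : ℝ) / ∑ p, (rp p : ℝ) * (m p) / ((m p : ℝ) - 1)) :
    Lc = (1 / ((r : ℝ) - 1)) *
        ((r : ℝ) / ∑ p, (rp p : ℝ) * (m p) / ((m p : ℝ) - 1)) ∧
    Lc = Lu / ((r : ℝ) - 1) := by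
  have hS : (0:ℝ) < ∑ p, (rp p : ℝ) * (m p) / ((m p : ℝ) - 1) := by
    apply Finset.sum_pos
    · intro p _
      have h2 : (2:ℝ) ≤ (m p : ℝ) := by exact_mod_cast hm p
      have h1 : (1:ℝ) ≤ (rp p : ℝ) := by exact_mod_cast hrp p
      apply div_pos
      · positivity
      · linarith
    · have : Nonempty (Fin P) := Fin.pos_iff_nonempty.mp (by omega)
      exact Finset.univ_nonempty
  have hXpos : (0:ℝ) < ∏ p, (m p : ℝ) ^ (rp p) := by
    apply Finset.prod_pos
    intro p _
    have h2 : (2:ℝ) ≤ (m p : ℝ) := by exact_mod_cast hm p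
    positivity
  have hr1 : (0:ℝ) < (r:ℝ) - 1 := by
    have : (2:ℝ) ≤ (r:ℝ) := by exact_mod_cast hr2
    linarith
  have hη1' : (0:ℝ) < (η1:ℝ) := by exact_mod_cast hη1
  have hη2' : (0:ℝ) < (η2:ℝ) := by exact_mod_cast hη2
  have hY' : (0:ℝ) < (Y:ℝ) := by exact_mod_cast hY
  have key : Lc = (1 / ((r : ℝ) - 1)) *
      ((r : ℝ) / ∑ p, (rp p : ℝ) * (m p) / ((m p : ℝ) - 1)) := by
    rw [hLc, hQ, hN, hX]
    field_simp
  exact ⟨key, by rw [key, hLu]; ring⟩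
end

section
/- Let P ≥ 1, m_1,…,m_P ≥ 2 integers, r_1,…,r_P positive integers, r = Σ_p r_p ≥ 2, K = Σ_p m_p·r_p. Then the coded communication load of the heterogeneous scheme satisfies L_c = r/((r − 1)·Σ_p r_p·m_p/(m_p − 1)) ≤ (1/(r − 1))·(1 − r/K). -/
/-- Let `P ≥ 1`, `m p ≥ 2` integers, `rp p` positive integers,
`r = ∑ p, rp p ≥ 2`, `K = ∑ p, m p * rp p`.  Then the coded communication load of the
heterogeneous scheme satisfies
`L_c = r / ((r - 1) * ∑ p, rp p * m p / (m p - 1)) ≤ (1/(r-1)) * (1 - r/K)`. -/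
theorem stmt_6 (P : ℕ) (hP : 1 ≤ P) (m rp : Fin P → ℕ)
    (hm : ∀ p, 2 ≤ m p) (hrp : ∀ p, 1 ≤ rp p)
    (r K : ℕ) (hr : r = ∑ p, rp p) (hr2 : 2 ≤ r) (hK : K = ∑ p, m p * rp p)
    (Lc : ℝ)
    (hLc : Lc = (r : ℝ) /
      (((r : ℝ) - 1) * ∑ p, (rp p : ℝ) * (m p) / ((m p : ℝ) - 1))) :
    Lc ≤ (1 / ((r : ℝ) - 1)) * (1 - (r : ℝ) / (K : ℝ)) := by
  have hne : (Finset.univ : Finset (Fin P)).Nonempty := by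
    simpa [Finset.univ_nonempty_iff] using Fin.pos_iff_nonempty.mp hP
  have hm1 : ∀ p, (0:ℝ) < (m p : ℝ) - 1 := by
    intro p
    have : (2:ℝ) ≤ (m p : ℝ) := by exact_mod_cast hm p
    linarith
  have hrp1 : ∀ p, (1:ℝ) ≤ (rp p : ℝ) := by
    intro p; exact_mod_cast hrp p
  set T : ℝ := ∑ p, (rp p : ℝ) / ((m p : ℝ) - 1) with hT
  set U : ℝ := ∑ p, (rp p : ℝ) * ((m p : ℝ) - 1) with hU
  have hTpos : 0 < T := by
    apply Finset.sum_pos _ hne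
    intro p _
    exact div_pos (by linarith [hrp1 p]) (hm1 p)
  have hUpos : 0 < U := by
    apply Finset.sum_pos _ hne
    intro p _
    exact mul_pos (by linarith [hrp1 p]) (hm1 p)
  -- Cauchy–Schwarz : r^2 ≤ T * U
  have hCS : ((r:ℝ))^2 ≤ T * U := by
    rw [hr, Nat.cast_sum, hT, hU]
    refine Finset.sum_sq_le_sum_mul_sum_of_sq_eq_mul _
      (fun p _ => div_nonneg (by linarith [hrp1 p]) (hm1 p).le)
      (fun p _ => mul_nonneg (by linarith [hrp1 p]) (hm1 p).le)
      (fun p _ => ?_)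
    rw [div_mul_eq_mul_div, mul_div_assoc, mul_div_cancel_right₀ _ (hm1 p).ne', sq]
  have hS : (∑ p, (rp p : ℝ) * (m p) / ((m p : ℝ) - 1)) = (r:ℝ) + T := by
    rw [hr, hT, Nat.cast_sum, ← Finset.sum_add_distrib]
    apply Finset.sum_congr rfl
    intro p _
    have h := (hm1 p).ne'
    field_simp
    ring
  have hKU : (K:ℝ) = (r:ℝ) + U := by
    rw [hK, hr, Nat.cast_sum, Nat.cast_sum, hU, ← Finset.sum_add_distrib]
    apply Finset.sum_congr rfl
    intro p _
    push_cast
    ring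
  have hr1 : (1:ℝ) < (r:ℝ) := by
    have : (2:ℝ) ≤ (r:ℝ) := by exact_mod_cast hr2
    linarith
  have hrpos : (0:ℝ) < (r:ℝ) := by linarith
  rw [hLc, hS, hKU]
  have hr1' : (0:ℝ) < (r:ℝ) - 1 := by linarith
  have hSpos : (0:ℝ) < (r:ℝ) + T := by linarith
  have hKpos : (0:ℝ) < (r:ℝ) + U := by linarith
  have key : (r:ℝ) / ((r:ℝ) + T) ≤ 1 - (r:ℝ) / ((r:ℝ) + U) := by
    have h1 : 1 - (r:ℝ) / ((r:ℝ) + U) = U / ((r:ℝ) + U) := by field_simp; ring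
    rw [h1, div_le_div_iff₀ hSpos hKpos]
    nlinarith [hCS]
  calc (r:ℝ) / (((r:ℝ) - 1) * ((r:ℝ) + T))
      = (1 / ((r:ℝ) - 1)) * ((r:ℝ) / ((r:ℝ) + T)) := by
        rw [one_div, mul_comm ((r:ℝ)-1), ← div_div, div_eq_mul_inv _ ((r:ℝ)-1), mul_comm]
    _ ≤ (1 / ((r:ℝ) - 1)) * (1 - (r:ℝ) / ((r:ℝ) + U)) := by
        exact mul_le_mul_of_nonneg_left key (by positivity)
end

section
/- (The heterogeneous scheme can strictly beat the homogeneous scheme.) There exist P ≥ 1, integers m_1,…,m_P ≥ 2, and positive integers r_1,…,r_P with r = Σ_p r_p ≥ 2 and K = Σ_p m_p·r_p, such that L_c = r/((r − 1)·Σ_p r_p·m_p/(m_p − 1)) < (1/r)·(1 − r/K) = L_1. In particular, P = 2, (m_1, r_1) = (2, 4), (m_2, r_2) = (8, 2) gives r = 6, K = 24, L_c = 7/60 < 1/8 = L_1. -/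
/-- **the heterogeneous scheme can strictly beat the homogeneous one.**
There exist `P ≥ 1`, integers `m p ≥ 2`, positive integers `rp p` with
`r = ∑ p, rp p ≥ 2` and `K = ∑ p, m p * rp p`, such that
`L_c = r / ((r-1) * ∑ p, rp p * m p / (m p - 1)) < (1/r) * (1 - r/K) = L_1`.
In particular `P = 2`, `(m 1, r 1) = (2, 4)`, `(m 2, r 2) = (8, 2)` gives `r = 6`,
`K = 24`, `L_c = 7/60 < 1/8 = L_1`. -/
theorem stmt_8 :
    (∃ (P : ℕ) (m rp : Fin P → ℕ) (r K : ℕ), 1 ≤ P ∧ (∀ p, 2 ≤ m p) ∧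
      (∀ p, 1 ≤ rp p) ∧ r = ∑ p, rp p ∧ 2 ≤ r ∧ K = ∑ p, m p * rp p ∧
      (r : ℝ) / (((r : ℝ) - 1) * ∑ p, (rp p : ℝ) * (m p) / ((m p : ℝ) - 1)) <
        (1 / (r : ℝ)) * (1 - (r : ℝ) / (K : ℝ))) ∧
    (∑ p : Fin 2, (![4, 2] : Fin 2 → ℕ) p = 6) ∧
    (∑ p : Fin 2, (![2, 8] : Fin 2 → ℕ) p * (![4, 2] : Fin 2 → ℕ) p = 24) ∧
    ((6 : ℝ) / (((6 : ℝ) - 1) *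
        ∑ p : Fin 2, (((![4, 2] : Fin 2 → ℕ) p : ℝ) * ((![2, 8] : Fin 2 → ℕ) p) /
          (((![2, 8] : Fin 2 → ℕ) p : ℝ) - 1))) = 7 / 60) ∧
    ((1 / (6 : ℝ)) * (1 - (6 : ℝ) / 24) = 1 / 8) ∧
    ((7 : ℝ) / 60 < 1 / 8) := by
  refine ⟨⟨2, ![2, 8], ![4, 2], 6, 24, ?_, ?_, ?_, ?_, ?_, ?_, ?_⟩, ?_, ?_, ?_, ?_, ?_⟩
  · norm_num
  · intro p; fin_cases p <;> norm_num
  · intro p; fin_cases p <;> norm_num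
  · simp [Fin.sum_univ_two]
  · norm_num
  · simp [Fin.sum_univ_two]
  · simp [Fin.sum_univ_two]; norm_num
  · simp [Fin.sum_univ_two]
  · simp [Fin.sum_univ_two]
  · simp [Fin.sum_univ_two]; norm_num
  · norm_num
  · norm_num
end

section
/- (Asymptotics with fixed computation load.) Fix P ≥ 1 and positive integers r_1,…,r_P with r = Σ_p r_p ≥ 2, and let m : ℕ → ℕ^P be sequences with m_p(t) ≥ 2 for all t and m_p(t) → ∞ as t → ∞ for each p. Define K(t) = Σ_p m_p(t)·r_p, L_c(t) = r/((r − 1)·Σ_p r_p·m_p(t)/(m_p(t) − 1)), and L_1(t) = (1/r)·(1 − r/K(t)). Then L_c(t)/L_1(t) → r/(r − 1) as t → ∞. -/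
open Filter

/-- **asymptotics with fixed computation load.** Fix `P ≥ 1` and positive
integers `rp p` with `r = ∑ p, rp p ≥ 2`, and let `m t p ≥ 2` with `m t p → ∞` as
`t → ∞` for each `p`.  With `K t = ∑ p, m t p * rp p`,
`L_c t = r / ((r - 1) * ∑ p, rp p * m t p / (m t p - 1))` and
`L_1 t = (1/r) * (1 - r / K t)`, one has `L_c t / L_1 t → r / (r - 1)` as `t → ∞`. -/
theorem stmt_9 (P : ℕ) (hP : 1 ≤ P) (rp : Fin P → ℕ) (hrp : ∀ p, 1 ≤ rp p)
    (r : ℕ) (hr : r = ∑ p, rp p) (hr2 : 2 ≤ r)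
    (m : ℕ → Fin P → ℕ) (hm : ∀ t p, 2 ≤ m t p)
    (hmtop : ∀ p, Tendsto (fun t => m t p) atTop atTop)
    (K Lc L1 : ℕ → ℝ)
    (hK : ∀ t, K t = ∑ p, (m t p : ℝ) * (rp p))
    (hLc : ∀ t, Lc t = (r : ℝ) /
      (((r : ℝ) - 1) * ∑ p, (rp p : ℝ) * (m t p) / ((m t p : ℝ) - 1)))
    (hL1 : ∀ t, L1 t = (1 / (r : ℝ)) * (1 - (r : ℝ) / K t)) :
    Tendsto (fun t => Lc t / L1 t) atTop (nhds ((r : ℝ) / ((r : ℝ) - 1))) := by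
  have hr0 : (r : ℝ) ≠ 0 := by
    have : (2:ℝ) ≤ (r:ℝ) := by exact_mod_cast hr2
    linarith
  have hr1 : (r : ℝ) - 1 ≠ 0 := by
    have : (2:ℝ) ≤ (r:ℝ) := by exact_mod_cast hr2
    intro h; linarith
  -- sum tends to r
  have hS : Tendsto (fun t => ∑ p, (rp p : ℝ) * (m t p) / ((m t p : ℝ) - 1))
      atTop (nhds (r : ℝ)) := by
    have : Tendsto (fun t => ∑ p, (rp p : ℝ) * (m t p) / ((m t p : ℝ) - 1))
        atTop (nhds (∑ p : Fin P, (rp p : ℝ))) := by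
      apply tendsto_finset_sum
      intro p _
      have h1 : Tendsto (fun t => (m t p : ℝ)) atTop atTop :=
        tendsto_natCast_atTop_atTop.comp (hmtop p)
      have h2 : Tendsto (fun t => (m t p : ℝ) - 1) atTop atTop := by
        simpa [sub_eq_add_neg] using tendsto_atTop_add_const_right atTop (-1 : ℝ) h1
      have h3 : Tendsto (fun t => (rp p : ℝ) / ((m t p : ℝ) - 1)) atTop (nhds 0) :=
        Tendsto.div_atTop tendsto_const_nhds h2
      have heq : ∀ t, (rp p : ℝ) + (rp p : ℝ) / ((m t p : ℝ) - 1)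
          = (rp p : ℝ) * (m t p) / ((m t p : ℝ) - 1) := by
        intro t
        have hm2 : (2:ℝ) ≤ (m t p : ℝ) := by exact_mod_cast hm t p
        have hne : (m t p : ℝ) - 1 ≠ 0 := by intro h; linarith
        field_simp
        ring
      have := (tendsto_const_nhds.add h3).congr heq
      simpa using this
    have hsum : (∑ p : Fin P, (rp p : ℝ)) = (r : ℝ) := by
      rw [hr]; push_cast; ring
    rwa [hsum] at this
  have hne2 : ((r:ℝ) - 1) * (r:ℝ) ≠ 0 := mul_ne_zero hr1 hr0
  have hLcT : Tendsto Lc atTop (nhds ((r:ℝ) / (((r:ℝ) - 1) * (r:ℝ)))) := by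
    have := Tendsto.div (tendsto_const_nhds (x := (r:ℝ)))
      (tendsto_const_nhds.mul hS) hne2
    exact Tendsto.congr (fun t => (hLc t).symm) this
  -- K tends to atTop
  have hKT : Tendsto K atTop atTop := by
    set p0 : Fin P := ⟨0, hP⟩
    have h1 : Tendsto (fun t => (m t p0 : ℝ)) atTop atTop :=
      tendsto_natCast_atTop_atTop.comp (hmtop p0)
    apply tendsto_atTop_mono _ h1
    intro t
    rw [hK t]
    have hle : (m t p0 : ℝ) * (rp p0 : ℝ) ≤ ∑ p, (m t p : ℝ) * (rp p : ℝ) := by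
      exact Finset.single_le_sum (f := fun p => (m t p : ℝ) * (rp p : ℝ))
        (fun p _ => by positivity) (Finset.mem_univ p0)
    have h2 : (m t p0 : ℝ) ≤ (m t p0 : ℝ) * (rp p0 : ℝ) := by
      have : (1:ℝ) ≤ (rp p0 : ℝ) := by exact_mod_cast hrp p0
      nlinarith [Nat.cast_nonneg (α := ℝ) (m t p0)]
    linarith
  have hL1T : Tendsto L1 atTop (nhds ((1 / (r:ℝ)) * (1 - 0))) := by
    have h3 : Tendsto (fun t => (r:ℝ) / K t) atTop (nhds 0) :=
      Tendsto.div_atTop tendsto_const_nhds hKT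
    have h4 : Tendsto (fun t => (1 / (r:ℝ)) * (1 - (r:ℝ) / K t)) atTop
        (nhds ((1 / (r:ℝ)) * (1 - 0))) :=
      Tendsto.mul tendsto_const_nhds (Tendsto.sub tendsto_const_nhds h3)
    exact Tendsto.congr (fun t => (hL1 t).symm) h4
  have hden : (1 / (r:ℝ)) * (1 - 0) ≠ 0 := by
    simp [hr0]
  have := hLcT.div hL1T hden
  have hval : (r:ℝ) / (((r:ℝ) - 1) * (r:ℝ)) / ((1 / (r:ℝ)) * (1 - 0))
      = (r:ℝ) / ((r:ℝ) - 1) := by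
    field_simp
    ring
  rwa [hval] at this
end

section
/- (Asymptotics with computation load growing linearly in K.) Fix P ≥ 1, integers m_1,…,m_P ≥ 2, and positive integers c_1,…,c_P, and for t ≥ 1 set r_p(t) = t·c_p, r(t) = t·Σ_p c_p, K(t) = t·Σ_p m_p·c_p, L_c(t) = r(t)/((r(t) − 1)·Σ_p r_p(t)·m_p/(m_p − 1)) and L_1(t) = (1/r(t))·(1 − r(t)/K(t)). Then as t → ∞, L_c(t)/L_1(t) → L_u/(1 − ρ), where L_u = (Σ_p c_p)/(Σ_p c_p·m_p/(m_p − 1)) and ρ = (Σ_p c_p)/(Σ_p m_p·c_p) are constants; moreover L_u/(1 − ρ) ≤ 1. -/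
open Filter

/-- **asymptotics with computation load growing linearly in `K`.**
Fix `P ≥ 1`, integers `m p ≥ 2` and positive integers `c p`, and for `t ≥ 1` set
`rp t p = t * c p`, `r t = t * ∑ p, c p`, `K t = t * ∑ p, m p * c p`,
`L_c t = r t / ((r t - 1) * ∑ p, (t * c p) * m p / (m p - 1))` and
`L_1 t = (1 / r t) * (1 - r t / K t)`.  Then as `t → ∞`,
`L_c t / L_1 t → L_u / (1 - ρ)`, where
`L_u = (∑ p, c p) / (∑ p, c p * m p / (m p - 1))` and
`ρ = (∑ p, c p) / (∑ p, m p * c p)` are constants; moreover `L_u / (1 - ρ) ≤ 1`. -/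
theorem stmt_10 (P : ℕ) (hP : 1 ≤ P) (m c : Fin P → ℕ)
    (hm : ∀ p, 2 ≤ m p) (hc : ∀ p, 1 ≤ c p)
    (r K Lc L1 : ℕ → ℝ)
    (hrt : ∀ t : ℕ, r t = (t : ℝ) * ∑ p, (c p : ℝ))
    (hKt : ∀ t : ℕ, K t = (t : ℝ) * ∑ p, (m p : ℝ) * (c p))
    (hLc : ∀ t : ℕ, Lc t = r t /
      ((r t - 1) * ∑ p, ((t : ℝ) * (c p)) * (m p) / ((m p : ℝ) - 1)))
    (hL1 : ∀ t : ℕ, L1 t = (1 / r t) * (1 - r t / K t))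
    (Lu ρ : ℝ)
    (hLu : Lu = (∑ p, (c p : ℝ)) / (∑ p, (c p : ℝ) * (m p) / ((m p : ℝ) - 1)))
    (hρ : ρ = (∑ p, (c p : ℝ)) / (∑ p, (m p : ℝ) * (c p))) :
    Tendsto (fun t => Lc t / L1 t) atTop (nhds (Lu / (1 - ρ))) ∧ Lu / (1 - ρ) ≤ 1 := by
  have hm1 : ∀ p, (1:ℝ) ≤ (m p : ℝ) - 1 := by
    intro p
    have := hm p
    have : (2:ℝ) ≤ (m p : ℝ) := by exact_mod_cast this
    linarith
  have hmpos : ∀ p, (0:ℝ) < (m p : ℝ) := fun p => by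
    have := hm1 p; linarith
  have hcpos : ∀ p, (0:ℝ) < (c p : ℝ) := fun p => by
    have := hc p
    exact_mod_cast Nat.lt_of_lt_of_le Nat.zero_lt_one this
  set A : ℝ := ∑ p, (c p : ℝ) with hA
  set B : ℝ := ∑ p, (c p : ℝ) * (m p) / ((m p : ℝ) - 1) with hB
  set C : ℝ := ∑ p, (m p : ℝ) * (c p) with hC
  clear_value A B C
  have hne : (Finset.univ : Finset (Fin P)).Nonempty := by
    rw [Finset.univ_nonempty_iff]
    exact Fin.pos_iff_nonempty.mp hP
  have hA1 : (1:ℝ) ≤ A := by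
    obtain ⟨p0, hp0⟩ := hne
    calc (1:ℝ) ≤ (c p0 : ℝ) := by exact_mod_cast hc p0
    _ ≤ A := by
      rw [hA]
      exact Finset.single_le_sum (fun p _ => (hcpos p).le) hp0
  have hApos : (0:ℝ) < A := lt_of_lt_of_le one_pos hA1
  have hBpos : (0:ℝ) < B := by
    rw [hB]
    apply Finset.sum_pos _ hne
    intro p _
    exact div_pos (mul_pos (hcpos p) (hmpos p)) (lt_of_lt_of_le one_pos (hm1 p))
  have hCpos : (0:ℝ) < C := by
    rw [hC]
    apply Finset.sum_pos _ hne
    intro p _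
    exact mul_pos (hmpos p) (hcpos p)
  have h2A : 2 * A ≤ C := by
    rw [hA, hC, Finset.mul_sum]
    apply Finset.sum_le_sum
    intro p _
    have h2m : (2:ℝ) ≤ (m p : ℝ) := by linarith [hm1 p]
    exact mul_le_mul_of_nonneg_right h2m (hcpos p).le
  have hρhalf : A / C ≤ 1 / 2 := by
    rw [div_le_div_iff₀ hCpos two_pos]
    linarith
  have hone_sub : (0:ℝ) < 1 - A / C := by
    have : A / C ≤ 1 / 2 := hρhalf
    linarith
  -- Cauchy-Schwarz applications
  set D : ℝ := ∑ p, (c p : ℝ) * ((m p : ℝ) - 1) / (m p) with hD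
  set E : ℝ := ∑ p, (c p : ℝ) / (m p) with hE
  clear_value D E
  have hDE : D + E = A := by
    rw [hD, hE, hA, ← Finset.sum_add_distrib]
    apply Finset.sum_congr rfl
    intro p _
    have hmne : (m p : ℝ) ≠ 0 := (hmpos p).ne'
    field_simp
    ring
  have csBD : A ^ 2 ≤ B * D := by
    rw [hA, hB, hD]
    apply Finset.sum_sq_le_sum_mul_sum_of_sq_eq_mul
    · intro p _
      have h1 := hm1 p
      have h2 := hcpos p
      have h3 := hmpos p
      have h4 : (0:ℝ) < (m p : ℝ) - 1 := by linarith
      positivity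
    · intro p _
      have h1 := hm1 p
      have h2 := hcpos p
      have h3 := hmpos p
      have h4 : (0:ℝ) < (m p : ℝ) - 1 := by linarith
      positivity
    · intro p _
      have hmne : (m p : ℝ) ≠ 0 := (hmpos p).ne'
      have hm1ne : (m p : ℝ) - 1 ≠ 0 := by linarith [hm1 p]
      field_simp
  have csCE : A ^ 2 ≤ C * E := by
    rw [hA, hC, hE]
    apply Finset.sum_sq_le_sum_mul_sum_of_sq_eq_mul
    · intro p _
      exact (mul_pos (hmpos p) (hcpos p)).le
    · intro p _
      exact (div_pos (hcpos p) (hmpos p)).le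
    · intro p _
      have hmne : (m p : ℝ) ≠ 0 := (hmpos p).ne'
      field_simp
  -- key inequality: A/B + A/C ≤ 1
  have hkey : A / B + A / C ≤ 1 := by
    have hDge : A ^ 2 / B ≤ D := (div_le_iff₀ hBpos).mpr (by linarith [csBD])
    have hEge : A ^ 2 / C ≤ E := (div_le_iff₀ hCpos).mpr (by linarith [csCE])
    have hsum : A ^ 2 / B + A ^ 2 / C ≤ A := by
      calc A ^ 2 / B + A ^ 2 / C ≤ D + E := add_le_add hDge hEge
      _ = A := hDE
    have : A * (A / B + A / C) ≤ A * 1 := by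
      have : A * (A / B + A / C) = A ^ 2 / B + A ^ 2 / C := by
        field_simp
      rw [this, mul_one]
      exact hsum
    exact le_of_mul_le_mul_left this hApos
  have hineq : Lu / (1 - ρ) ≤ 1 := by
    rw [hLu, hρ]
    rw [div_le_one hone_sub]
    have hAB : A / B ≤ 1 - A / C := by linarith
    exact hAB
  refine ⟨?_, hineq⟩
  -- the limit
  have hLuρ : Lu / (1 - ρ) = (A / B) / (1 - A / C) := by
    rw [hLu, hρ]
  -- eventual equality
  have hev : (fun t : ℕ => Lu / (1 - ρ) * (1 + 1 / ((t : ℝ) * A - 1)))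
      =ᶠ[atTop] (fun t : ℕ => Lc t / L1 t) := by
    filter_upwards [eventually_ge_atTop 2] with t ht
    have ht2 : (2:ℝ) ≤ (t : ℝ) := by exact_mod_cast ht
    have htA : (2:ℝ) ≤ (t : ℝ) * A := by
      calc (2:ℝ) = 2 * 1 := by ring
      _ ≤ (t:ℝ) * A := by
        apply mul_le_mul ht2 hA1 zero_le_one (by linarith)
    have htA1 : (0:ℝ) < (t : ℝ) * A - 1 := by linarith
    have htpos : (0:ℝ) < (t:ℝ) := by linarith
    have hsum_t : (∑ p, ((t : ℝ) * (c p)) * (m p) / ((m p : ℝ) - 1)) = (t:ℝ) * B := by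
      rw [hB, Finset.mul_sum]
      apply Finset.sum_congr rfl
      intro p _
      ring
    rw [hLc, hL1, hrt, hKt, hsum_t, hLuρ, eq_comm]
    have h1 : (0:ℝ) < (t:ℝ) * A := by positivity
    have h4 : (t:ℝ) * A - 1 ≠ 0 := htA1.ne'
    have h5 : (1:ℝ) - A / C ≠ 0 := hone_sub.ne'
    have h6 : B ≠ 0 := hBpos.ne'
    have h9 : (t:ℝ) * A / ((t:ℝ) * C) = A / C := mul_div_mul_left A C htpos.ne'
    have hCA : (0:ℝ) < C - A := by linarith
    have h12 : 1 - A / C = (C - A) / C := by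
      field_simp
    rw [h9, h12]
    field_simp [h4, hBpos.ne', hCpos.ne', hApos.ne', htpos.ne', hCA.ne']
    ring
  rw [show Lu / (1 - ρ) = Lu / (1 - ρ) * (1 + 0) by ring]
  apply Tendsto.congr' hev
  apply Tendsto.const_mul
  apply Tendsto.const_add
  have hatTop : Tendsto (fun t : ℕ => (t : ℝ) * A - 1) atTop atTop := by
    apply tendsto_atTop_add_const_right
    exact Tendsto.atTop_mul_const hApos tendsto_natCast_atTop_atTop
  simpa [one_div, Function.comp_def] using tendsto_inv_atTop_zero.comp hatTop
end
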